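/- In the affine type A_2 Hecke algebra H (with generators and relations as above), the elements θ_{w_g}, θ_{w_o}, θ_{w_p} satisfy θ_{w_g} θ_{w_o} θ_{w_g} = θ_{w_g} θ_{w_p} θ_{w_g}. -/
import Mathlib


set_option synthInstance.maxHeartbeats 1000000
set_option maxHeartbeats 1000000

/-- The quantum number `[n] = (v^n - v^{-n})/(v - v^{-1})` in `ℂ(v)`. -/
noncomputable def qn (n : ℤ) : RatFunc ℂ :=
  (RatFunc.X ^ n - RatFunc.X ^ (-n)) / (RatFunc.X - RatFunc.X⁻¹)

/-- In the affine type `A₂` Hecke algebra (generators `θ_b, θ_r, θ_y` with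
`θ_c² = [2]θ_c` and the cubic relations), the elements `θ_{w_g} = θ_bθ_yθ_b − θ_b`,
`θ_{w_o} = θ_rθ_yθ_r − θ_r`, `θ_{w_p} = θ_bθ_rθ_b − θ_b` satisfy
`θ_{w_g} θ_{w_o} θ_{w_g} = θ_{w_g} θ_{w_p} θ_{w_g}`. -/
theorem stmt_10 (A : Type) [Ring A] [Algebra (RatFunc ℂ) A] (θb θr θy : A)
    (hb : θb ^ 2 = qn 2 • θb) (hr : θr ^ 2 = qn 2 • θr) (hy : θy ^ 2 = qn 2 • θy)
    (hby : θb * θy * θb - θb = θy * θb * θy - θy)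
    (hry : θr * θy * θr - θr = θy * θr * θy - θy)
    (hbr : θb * θr * θb - θb = θr * θb * θr - θr) :
    (θb * θy * θb - θb) * (θr * θy * θr - θr) * (θb * θy * θb - θb) =
      (θb * θy * θb - θb) * (θb * θr * θb - θb) * (θb * θy * θb - θb) := by
  have hy' : θy * θy = qn 2 • θy := by rw [← hy]; exact (pow_two θy).symm
  have hb' : θb * θb = qn 2 • θb := by rw [← hb]; exact (pow_two θb).symm
  have hgy : (θb * θy * θb - θb) * θy = qn 2 • (θb * θy * θb - θb) := by
    rw [hby]
    calc (θy * θb * θy - θy) * θy = θy * θb * (θy * θy) - θy * θy := by noncomm_ring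
      _ = qn 2 • (θy * θb * θy - θy) := by
          rw [hy']; simp [mul_smul_comm, smul_sub]
  have hyg : θy * (θb * θy * θb - θb) = qn 2 • (θb * θy * θb - θb) := by
    rw [hby]
    calc θy * (θy * θb * θy - θy) = (θy * θy) * θb * θy - θy * θy := by noncomm_ring
      _ = qn 2 • (θy * θb * θy - θy) := by
          rw [hy']; simp [smul_mul_assoc, smul_sub]
  have hgb : (θb * θy * θb - θb) * θb = qn 2 • (θb * θy * θb - θb) := by
    calc (θb * θy * θb - θb) * θb = θb * θy * (θb * θb) - θb * θb := by noncomm_ring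
      _ = qn 2 • (θb * θy * θb - θb) := by
          rw [hb']; simp [mul_smul_comm, smul_sub]
  have hbg : θb * (θb * θy * θb - θb) = qn 2 • (θb * θy * θb - θb) := by
    calc θb * (θb * θy * θb - θb) = (θb * θb) * θy * θb - θb * θb := by noncomm_ring
      _ = qn 2 • (θb * θy * θb - θb) := by
          rw [hb']; simp [smul_mul_assoc, smul_sub]
  calc (θb * θy * θb - θb) * (θr * θy * θr - θr) * (θb * θy * θb - θb)
      = (θb * θy * θb - θb) * (θy * θr * θy - θy) * (θb * θy * θb - θb) := by rw [hry]
    _ = ((θb * θy * θb - θb) * θy) * θr * (θy * (θb * θy * θb - θb))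
          - ((θb * θy * θb - θb) * θy) * (θb * θy * θb - θb) := by noncomm_ring
    _ = (qn 2 • (θb * θy * θb - θb)) * θr * (qn 2 • (θb * θy * θb - θb))
          - (qn 2 • (θb * θy * θb - θb)) * (θb * θy * θb - θb) := by rw [hgy, hyg]
    _ = ((θb * θy * θb - θb) * θb) * θr * (θb * (θb * θy * θb - θb))
          - ((θb * θy * θb - θb) * θb) * (θb * θy * θb - θb) := by rw [hgb, hbg]
    _ = (θb * θy * θb - θb) * (θb * θr * θb - θb) * (θb * θy * θb - θb) := by noncomm_ring
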